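/- Let 𝐀 = [A̲, Ā] ⊆ ℝ^{m×n} be an interval matrix and 𝐛 = [b̲, b̄] ⊆ ℝᵐ, 𝐜 = [c̲, c̄] ⊆ ℝⁿ interval vectors, and set b_c = (b̄ + b̲)/2, b_Δ = (b̄ − b̲)/2. Consider the interval linear program min c⊤x subject to Ax ≤ b (with A ∈ 𝐀, b ∈ 𝐛, c ∈ 𝐜) and let f̄ be its worst optimal value, i.e., the supremum over all scenarios of the scenario's optimal value in the extended reals (+∞ for infeasible scenarios). If f̄ < ∞, then f̄ equals the supremum of b_c⊤y + b_Δ⊤|y| over the weakly feasible set of the dual, N = {y ∈ ℝᵐ : y ≤ 0 and ∃A ∈ 𝐀, ∃c ∈ 𝐜, A⊤y = c}, where |y| denotes the entrywise absolute value. -/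

import Mathlib

open Matrix Finset


lemma sub_smul_dot {ρ : Type} [Fintype ρ] (w y v : ρ → ℝ) (r : ℝ) :
    (w - r • y) ⬝ᵥ v = w ⬝ᵥ v - r * (y ⬝ᵥ v) := by
  rw [sub_dotProduct, smul_dotProduct, smul_eq_mul]

lemma dot_sub_smul {ρ : Type} [Fintype ρ] (w v u : ρ → ℝ) (s : ℝ) :
    w ⬝ᵥ (v - s • u) = w ⬝ᵥ v - s * (w ⬝ᵥ u) := by
  rw [dotProduct_sub, dotProduct_smul, smul_eq_mul]

theorem farkas_aux {ρ : Type} [Fintype ρ] :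
    ∀ (k : ℕ) (a : Fin k → ρ → ℝ) (b : ρ → ℝ),
    (∃ lam : Fin k → ℝ, (∀ i, 0 ≤ lam i) ∧ b = ∑ i, lam i • a i) ∨
    (∃ y : ρ → ℝ, (∀ i, 0 ≤ y ⬝ᵥ a i) ∧ y ⬝ᵥ b < 0) := by
  intro k
  induction k with
  | zero =>
    intro a b
    by_cases hb : b = 0
    · exact Or.inl ⟨0, fun i => le_refl _, by simp [hb]⟩
    · refine Or.inr ⟨-b, fun i => i.elim0, ?_⟩
      have h1 : (0:ℝ) ≤ b ⬝ᵥ b := Finset.sum_nonneg fun i _ => mul_self_nonneg _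
      have h2 : b ⬝ᵥ b ≠ 0 := fun h => hb ((dotProduct_self_eq_zero).mp h)
      rw [neg_dotProduct]
      exact neg_lt_zero.mpr (h1.lt_of_ne (Ne.symm h2))
  | succ k ih =>
    intro a b
    set aL := a (Fin.last k) with haL
    rcases ih (fun i => a i.castSucc) b with ⟨lam, h0, hb⟩ | ⟨y, hy, hyb⟩
    · left
      refine ⟨Fin.snoc lam 0, ?_, ?_⟩
      · intro i
        refine Fin.lastCases ?_ ?_ i
        · simp
        · intro j; simpa using h0 j
      · rw [Fin.sum_univ_castSucc]
        simp only [Fin.snoc_castSucc, Fin.snoc_last, zero_smul, add_zero]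
        exact hb
    · rcases le_or_gt 0 (y ⬝ᵥ aL) with hL | hL
      · exact Or.inr ⟨y, fun i => Fin.lastCases hL (fun j => hy j) i, hyb⟩
      · set d := y ⬝ᵥ aL with hd
        have hdne : d ≠ 0 := ne_of_lt hL
        rcases ih (fun i => a i.castSucc - (y ⬝ᵥ a i.castSucc / d) • aL)
                  (b - (y ⬝ᵥ b / d) • aL) with ⟨lam, h0, hb⟩ | ⟨w, hw, hwb⟩
        · left
          set μ := (y ⬝ᵥ b - ∑ i : Fin k, lam i * (y ⬝ᵥ a i.castSucc)) / d with hμ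
          have hμ0 : 0 ≤ μ := by
            rw [hμ, div_nonneg_iff]
            right
            have hsum : 0 ≤ ∑ i : Fin k, lam i * (y ⬝ᵥ a i.castSucc) :=
              Finset.sum_nonneg fun i _ => mul_nonneg (h0 i) (hy i)
            constructor <;> linarith
          refine ⟨Fin.snoc lam μ, ?_, ?_⟩
          · intro i
            refine Fin.lastCases ?_ ?_ i
            · simpa using hμ0
            · intro j; simpa using h0 j
          · rw [Fin.sum_univ_castSucc]
            simp only [Fin.snoc_castSucc, Fin.snoc_last]
            have key : -((∑ i : Fin k, lam i * (y ⬝ᵥ a i.castSucc / d)) - y ⬝ᵥ b / d) = μ := by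
              rw [hμ, neg_sub]
              simp only [← mul_div_assoc, ← Finset.sum_div, ← sub_div]
            calc b = (b - (y ⬝ᵥ b / d) • aL) + (y ⬝ᵥ b / d) • aL := (sub_add_cancel b _).symm
              _ = (∑ i : Fin k, lam i • (a i.castSucc - (y ⬝ᵥ a i.castSucc / d) • aL))
                    + (y ⬝ᵥ b / d) • aL := by rw [hb]
              _ = ∑ i : Fin k, lam i • a i.castSucc + μ • aL := by
                  simp only [smul_sub, Finset.sum_sub_distrib, smul_smul, ← Finset.sum_smul]
                  rw [sub_add, ← sub_smul, sub_eq_add_neg, ← neg_smul, key]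
        · right
          refine ⟨w - (w ⬝ᵥ aL / d) • y, ?_, ?_⟩
          · intro i
            refine Fin.lastCases ?_ ?_ i
            · rw [sub_smul_dot, div_mul_cancel₀ _ hdne, sub_self]
            · intro j
              have h := hw j
              rw [dot_sub_smul] at h
              rw [sub_smul_dot]
              have e : w ⬝ᵥ aL / d * (y ⬝ᵥ a j.castSucc)
                  = y ⬝ᵥ a j.castSucc / d * (w ⬝ᵥ aL) := by ring
              rw [e]
              exact h
          · have h := hwb
            rw [dot_sub_smul] at h
            rw [sub_smul_dot]
            have e : w ⬝ᵥ aL / d * (y ⬝ᵥ b) = y ⬝ᵥ b / d * (w ⬝ᵥ aL) := by ring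
            rw [e]
            exact h


theorem farkas {ρ ι : Type} [Fintype ρ] [Fintype ι] (a : ι → ρ → ℝ) (b : ρ → ℝ) :
    (∃ lam : ι → ℝ, (∀ i, 0 ≤ lam i) ∧ b = ∑ i, lam i • a i) ∨
    (∃ y : ρ → ℝ, (∀ i, 0 ≤ y ⬝ᵥ a i) ∧ y ⬝ᵥ b < 0) := by
  classical
  obtain e := Fintype.equivFin ι
  rcases farkas_aux (Fintype.card ι) (fun i => a (e.symm i)) b with ⟨lam, h0, hb⟩ | ⟨y, hy, hyb⟩
  · left
    refine ⟨lam ∘ e, fun i => h0 (e i), ?_⟩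
    rw [hb]
    rw [← Equiv.sum_comp e.symm (fun j => (lam ∘ e) j • a j)]
    refine Finset.sum_congr rfl fun i _ => ?_
    simp
  · right
    exact ⟨y, fun i => by simpa using hy (e i), hyb⟩

theorem gale {ρ : Type} [Fintype ρ] [DecidableEq ρ] {n : ℕ}
    (A : Matrix ρ (Fin n) ℝ) (b : ρ → ℝ)
    (h : ∀ x : Fin n → ℝ, ¬ A.mulVec x ≤ b) :
    ∃ u : ρ → ℝ, (∀ i, 0 ≤ u i) ∧ Aᵀ.mulVec u = 0 ∧ u ⬝ᵥ b < 0 := by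
  classical
  set g : (Fin n ⊕ Fin n) ⊕ ρ → ρ → ℝ := fun s => match s with
    | .inl (.inl j) => fun i => A i j
    | .inl (.inr j) => fun i => -A i j
    | .inr i0 => Pi.single i0 1
  rcases farkas g b with ⟨lam, h0, hb⟩ | ⟨y, hy, hyb⟩
  · exfalso
    apply h (fun j => lam (.inl (.inl j)) - lam (.inl (.inr j)))
    intro i
    have hbi := congrFun hb i
    rw [Finset.sum_apply] at hbi
    rw [Fintype.sum_sum_type, Fintype.sum_sum_type] at hbi
    simp only [Pi.smul_apply, smul_eq_mul, g] at hbi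
    have hs : ∑ i0 : ρ, lam (.inr i0) * (Pi.single i0 1 : ρ → ℝ) i = lam (.inr i) := by
      rw [Finset.sum_eq_single i]
      · simp
      · intro j _ hj; simp [Pi.single_apply, hj]
      · simp
    rw [hs] at hbi
    have : A.mulVec (fun j => lam (.inl (.inl j)) - lam (.inl (.inr j))) i
        = ∑ j, A i j * (lam (.inl (.inl j)) - lam (.inl (.inr j))) := rfl
    rw [this]
    have h0i : 0 ≤ lam (.inr i) := h0 _
    have : ∑ j, A i j * (lam (.inl (.inl j)) - lam (.inl (.inr j)))
        = (∑ j, lam (.inl (.inl j)) * A i j) + ∑ j, lam (.inl (.inr j)) * -A i j := by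
      rw [← Finset.sum_add_distrib]
      exact Finset.sum_congr rfl fun j _ => by ring
    rw [this]
    linarith
  · refine ⟨y, fun i => by simpa [g, dotProduct, Pi.single_apply, mul_comm] using hy (.inr i), ?_, hyb⟩
    funext j
    have h1 := hy (.inl (.inl j))
    have h2 := hy (.inl (.inr j))
    simp only [g] at h1 h2
    have he : y ⬝ᵥ (fun i => -A i j) = -(y ⬝ᵥ fun i => A i j) := by
      simp [dotProduct]
    rw [he] at h2
    have h3 : y ⬝ᵥ (fun i => A i j) = 0 := le_antisymm (by linarith) h1
    have : Aᵀ.mulVec y j = (fun i => A i j) ⬝ᵥ y := rfl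
    rw [this, dotProduct_comm]
    exact h3


theorem dual_bound {m n : ℕ} (A : Matrix (Fin m) (Fin n) ℝ) (b : Fin m → ℝ) (c : Fin n → ℝ)
    (x₀ : Fin n → ℝ) (hx₀ : A.mulVec x₀ ≤ b) (r : ℝ)
    (hr : ∀ x, A.mulVec x ≤ b → r < c ⬝ᵥ x) :
    ∃ y : Fin m → ℝ, y ≤ 0 ∧ Aᵀ.mulVec y = c ∧ r ≤ b ⬝ᵥ y := by
  classical
  set C : Matrix (Fin m ⊕ Unit) (Fin n) ℝ := Matrix.of (fun s j => match s with
    | .inl i => A i j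
    | .inr _ => c j) with hC
  set dv : Fin m ⊕ Unit → ℝ := fun s => match s with | .inl i => b i | .inr _ => r with hdv
  have hinf : ∀ x : Fin n → ℝ, ¬ C.mulVec x ≤ dv := by
    intro x hx
    have hAx : A.mulVec x ≤ b := fun i => hx (.inl i)
    have hcx : c ⬝ᵥ x ≤ r := hx (.inr ())
    exact absurd hcx (not_le.mpr (hr x hAx))
  obtain ⟨u, hu0, huC, hud⟩ := gale C dv hinf
  set t := u (.inr ()) with ht
  set u' : Fin m → ℝ := fun i => u (.inl i) with hu'
  have hCt : ∀ j, (∑ i, A i j * u' i) + c j * t = 0 := by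
    intro j
    have h1 := congrFun huC j
    have h2 : Cᵀ.mulVec u j = ∑ s : Fin m ⊕ Unit, C s j * u s := rfl
    rw [h2, Fintype.sum_sum_type] at h1
    simpa [hC, hu', ht] using h1
  have hS : (∑ i, u' i * b i) + t * r < 0 := by
    have h2 : u ⬝ᵥ dv = ∑ s : Fin m ⊕ Unit, u s * dv s := rfl
    rw [h2, Fintype.sum_sum_type] at hud
    simpa using hud
  have ht0 : 0 ≤ t := hu0 _
  rcases eq_or_lt_of_le ht0 with htz | htp
  · exfalso
    have hA0 : ∀ j, ∑ i, A i j * u' i = 0 := by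
      intro j
      have := hCt j
      rw [← htz, mul_zero, add_zero] at this
      exact this
    have hvm : u' ⬝ᵥ A.mulVec x₀ = 0 := by
      rw [dotProduct_mulVec]
      have hv : vecMul u' A = 0 := by
        funext j
        show ∑ i, u' i * A i j = 0
        rw [← hA0 j]
        exact Finset.sum_congr rfl fun i _ => mul_comm _ _
      rw [hv, zero_dotProduct]
    have hle : u' ⬝ᵥ A.mulVec x₀ ≤ ∑ i, u' i * b i :=
      Finset.sum_le_sum fun i _ => mul_le_mul_of_nonneg_left (hx₀ i) (hu0 _)
    rw [← htz, zero_mul, add_zero] at hS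
    linarith
  · refine ⟨(-t⁻¹) • u', ?_, ?_, ?_⟩
    · intro i
      show (-t⁻¹) * u' i ≤ 0
      exact mul_nonpos_of_nonpos_of_nonneg (neg_nonpos.mpr (inv_nonneg.mpr ht0)) (hu0 _)
    · funext j
      show ∑ i, A i j * ((-t⁻¹) * u' i) = c j
      have e1 : ∑ i, A i j * ((-t⁻¹) * u' i) = (-t⁻¹) * ∑ i, A i j * u' i := by
        rw [Finset.mul_sum]
        exact Finset.sum_congr rfl fun i _ => by ring
      have e2 : ∑ i, A i j * u' i = -(c j * t) := by linarith [hCt j]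
      rw [e1, e2]
      field_simp
    · rw [dotProduct_smul, smul_eq_mul]
      have hbu : b ⬝ᵥ u' = ∑ i, u' i * b i := by
        rw [dotProduct_comm]; rfl
      rw [hbu]
      have h2 : r ≤ -(∑ i, u' i * b i) / t := by
        rw [le_div_iff₀ htp]
        linarith
      have h3 : -t⁻¹ * (∑ i, u' i * b i) = -(∑ i, u' i * b i) / t := by ring
      rw [h3]
      exact h2


lemma max_b {m : ℕ} (bl bu : Fin m → ℝ) (y : Fin m → ℝ) (hy : y ≤ 0) :
    ((bu + bl) / 2) ⬝ᵥ y + ((bu - bl) / 2) ⬝ᵥ (fun i => |y i|) = bl ⬝ᵥ y := by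
  simp only [dotProduct, ← Finset.sum_add_distrib]
  refine Finset.sum_congr rfl fun i _ => ?_
  have h := hy i
  rw [abs_of_nonpos h]
  simp only [Pi.div_apply, Pi.add_apply, Pi.sub_apply]
  have h2 : (2 : Fin m → ℝ) i = (2:ℝ) := rfl
  rw [h2]
  ring

lemma weak_dual {m n : ℕ} (A : Matrix (Fin m) (Fin n) ℝ) (b' : Fin m → ℝ) (c : Fin n → ℝ)
    (y : Fin m → ℝ) (hy : y ≤ 0) (hAy : Aᵀ.mulVec y = c)
    (x : Fin n → ℝ) (hx : A.mulVec x ≤ b') : b' ⬝ᵥ y ≤ c ⬝ᵥ x := by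
  have h1 : c ⬝ᵥ x = y ⬝ᵥ A.mulVec x := by
    rw [← hAy, mulVec_transpose, ← dotProduct_mulVec]
  have h2 : y ⬝ᵥ b' ≤ y ⬝ᵥ A.mulVec x :=
    Finset.sum_le_sum fun i _ => mul_le_mul_of_nonpos_left (hx i) (hy i)
  rw [h1, dotProduct_comm]
  exact h2

/-- Entrywise order on real matrices. -/
def matLE {m n : ℕ} (A B : Matrix (Fin m) (Fin n) ℝ) : Prop := ∀ i j, A i j ≤ B i j

/-- If the worst optimal value of the interval program `min cᵀx, Ax ≤ b` is finite, then
it equals the supremum of `b_cᵀy + b_Δᵀ|y|` over the weakly feasible set of the dual. -/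
theorem worst_value_formula (m n : ℕ) (Al Au : Matrix (Fin m) (Fin n) ℝ)
    (bl bu : Fin m → ℝ) (cl cu : Fin n → ℝ)
    (hA : matLE Al Au) (hb : bl ≤ bu) (hc : cl ≤ cu)
    (hfin : (⨆ A : {A : Matrix (Fin m) (Fin n) ℝ // matLE Al A ∧ matLE A Au},
             ⨆ b : {b : Fin m → ℝ // bl ≤ b ∧ b ≤ bu},
             ⨆ c : {c : Fin n → ℝ // cl ≤ c ∧ c ≤ cu},
             ⨅ x : {x : Fin n → ℝ // A.1.mulVec x ≤ b.1},
               ((c.1 ⬝ᵥ x.1 : ℝ) : EReal)) < ⊤) :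
    (⨆ A : {A : Matrix (Fin m) (Fin n) ℝ // matLE Al A ∧ matLE A Au},
     ⨆ b : {b : Fin m → ℝ // bl ≤ b ∧ b ≤ bu},
     ⨆ c : {c : Fin n → ℝ // cl ≤ c ∧ c ≤ cu},
     ⨅ x : {x : Fin n → ℝ // A.1.mulVec x ≤ b.1},
       ((c.1 ⬝ᵥ x.1 : ℝ) : EReal)) =
    ⨆ y : {y : Fin m → ℝ // y ≤ 0 ∧ ∃ (A : Matrix (Fin m) (Fin n) ℝ) (c : Fin n → ℝ),
        matLE Al A ∧ matLE A Au ∧ cl ≤ c ∧ c ≤ cu ∧ Aᵀ.mulVec y = c},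
      ((((bu + bl) / 2) ⬝ᵥ y.1 + ((bu - bl) / 2) ⬝ᵥ (fun i => |y.1 i|) : ℝ) : EReal) := by
  apply le_antisymm
  · -- LHS ≤ RHS
    refine iSup_le fun A => iSup_le fun b => iSup_le fun c => ?_
    by_contra hcon
    rw [not_le] at hcon
    -- hcon : RHS < I
    have hIS : (⨅ x : {x : Fin n → ℝ // A.1.mulVec x ≤ b.1}, ((c.1 ⬝ᵥ x.1 : ℝ) : EReal)) ≤
        (⨆ A : {A : Matrix (Fin m) (Fin n) ℝ // matLE Al A ∧ matLE A Au},
         ⨆ b : {b : Fin m → ℝ // bl ≤ b ∧ b ≤ bu},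
         ⨆ c : {c : Fin n → ℝ // cl ≤ c ∧ c ≤ cu},
         ⨅ x : {x : Fin n → ℝ // A.1.mulVec x ≤ b.1}, ((c.1 ⬝ᵥ x.1 : ℝ) : EReal)) := by
      refine le_trans (le_iSup (fun c : {c : Fin n → ℝ // cl ≤ c ∧ c ≤ cu} =>
          ⨅ x : {x : Fin n → ℝ // A.1.mulVec x ≤ b.1}, ((c.1 ⬝ᵥ x.1 : ℝ) : EReal)) c) ?_
      refine le_trans (le_iSup (fun b : {b : Fin m → ℝ // bl ≤ b ∧ b ≤ bu} =>
          ⨆ c : {c : Fin n → ℝ // cl ≤ c ∧ c ≤ cu},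
          ⨅ x : {x : Fin n → ℝ // A.1.mulVec x ≤ b.1}, ((c.1 ⬝ᵥ x.1 : ℝ) : EReal)) b) ?_
      exact le_iSup (fun A : {A : Matrix (Fin m) (Fin n) ℝ // matLE Al A ∧ matLE A Au} =>
          ⨆ b : {b : Fin m → ℝ // bl ≤ b ∧ b ≤ bu},
          ⨆ c : {c : Fin n → ℝ // cl ≤ c ∧ c ≤ cu},
          ⨅ x : {x : Fin n → ℝ // A.1.mulVec x ≤ b.1}, ((c.1 ⬝ᵥ x.1 : ℝ) : EReal)) A
    have hIlt : (⨅ x : {x : Fin n → ℝ // A.1.mulVec x ≤ b.1}, ((c.1 ⬝ᵥ x.1 : ℝ) : EReal)) < ⊤ :=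
      lt_of_le_of_lt hIS hfin
    have hne : Nonempty {x : Fin n → ℝ // A.1.mulVec x ≤ b.1} := by
      by_contra hempty
      rw [not_nonempty_iff] at hempty
      rw [iInf_of_empty] at hIlt
      exact lt_irrefl _ hIlt
    obtain ⟨x₀, hx₀⟩ := Classical.choice hne
    obtain ⟨r, hr1, hr2⟩ := EReal.exists_between_coe_real hcon
    have hrstrict : ∀ x, A.1.mulVec x ≤ b.1 → r < c.1 ⬝ᵥ x := by
      intro x hx
      have := lt_of_lt_of_le hr2 (iInf_le _ (⟨x, hx⟩ : {x : Fin n → ℝ // A.1.mulVec x ≤ b.1}))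
      exact_mod_cast this
    obtain ⟨y, hy0, hAy, hrb⟩ := dual_bound A.1 b.1 c.1 x₀ hx₀ r hrstrict
    have hmem : y ≤ 0 ∧ ∃ (A' : Matrix (Fin m) (Fin n) ℝ) (c' : Fin n → ℝ),
        matLE Al A' ∧ matLE A' Au ∧ cl ≤ c' ∧ c' ≤ cu ∧ A'ᵀ.mulVec y = c' :=
      ⟨hy0, A.1, c.1, A.2.1, A.2.2, c.2.1, c.2.2, hAy⟩
    have hterm : (r : EReal) ≤
        ⨆ y : {y : Fin m → ℝ // y ≤ 0 ∧ ∃ (A : Matrix (Fin m) (Fin n) ℝ) (c : Fin n → ℝ),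
            matLE Al A ∧ matLE A Au ∧ cl ≤ c ∧ c ≤ cu ∧ Aᵀ.mulVec y = c},
          ((((bu + bl) / 2) ⬝ᵥ y.1 + ((bu - bl) / 2) ⬝ᵥ (fun i => |y.1 i|) : ℝ) : EReal) := by
      refine le_trans ?_ (le_iSup (fun y : {y : Fin m → ℝ // y ≤ 0 ∧
          ∃ (A : Matrix (Fin m) (Fin n) ℝ) (c : Fin n → ℝ),
          matLE Al A ∧ matLE A Au ∧ cl ≤ c ∧ c ≤ cu ∧ Aᵀ.mulVec y = c} =>
          ((((bu + bl) / 2) ⬝ᵥ y.1 + ((bu - bl) / 2) ⬝ᵥ (fun i => |y.1 i|) : ℝ) : EReal))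
          ⟨y, hmem⟩)
      rw [EReal.coe_le_coe_iff]
      rw [max_b bl bu y hy0]
      -- r ≤ bl ⬝ᵥ y ; have r ≤ b.1 ⬝ᵥ y and b.1 ⬝ᵥ y ≤ bl ⬝ᵥ y
      have hbly : b.1 ⬝ᵥ y ≤ bl ⬝ᵥ y :=
        Finset.sum_le_sum fun i _ => mul_le_mul_of_nonpos_right (b.2.1 i) (hy0 i)
      linarith
    exact absurd (lt_of_le_of_lt hterm hr1) (lt_irrefl _)
  · -- RHS ≤ LHS
    refine iSup_le fun y => ?_
    obtain ⟨hy0, Ay, cy, h1, h2, h3, h4, h5⟩ := y.2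
    rw [max_b bl bu y.1 hy0]
    have step : ((bl ⬝ᵥ y.1 : ℝ) : EReal) ≤
        ⨅ x : {x : Fin n → ℝ // Ay.mulVec x ≤ bl}, ((cy ⬝ᵥ x.1 : ℝ) : EReal) := by
      refine le_iInf fun x => ?_
      rw [EReal.coe_le_coe_iff]
      exact weak_dual Ay bl cy y.1 hy0 h5 x.1 x.2
    refine le_trans step ?_
    refine le_trans (le_iSup (fun c : {c : Fin n → ℝ // cl ≤ c ∧ c ≤ cu} =>
        ⨅ x : {x : Fin n → ℝ // Ay.mulVec x ≤ bl}, ((c.1 ⬝ᵥ x.1 : ℝ) : EReal)) ⟨cy, h3, h4⟩) ?_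
    refine le_trans (le_iSup (fun b : {b : Fin m → ℝ // bl ≤ b ∧ b ≤ bu} =>
        ⨆ c : {c : Fin n → ℝ // cl ≤ c ∧ c ≤ cu},
        ⨅ x : {x : Fin n → ℝ // Ay.mulVec x ≤ b.1}, ((c.1 ⬝ᵥ x.1 : ℝ) : EReal))
        ⟨bl, le_refl _, hb⟩) ?_
    exact le_iSup (fun A : {A : Matrix (Fin m) (Fin n) ℝ // matLE Al A ∧ matLE A Au} =>
        ⨆ b : {b : Fin m → ℝ // bl ≤ b ∧ b ≤ bu},
        ⨆ c : {c : Fin n → ℝ // cl ≤ c ∧ c ≤ cu},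
        ⨅ x : {x : Fin n → ℝ // A.1.mulVec x ≤ b.1}, ((c.1 ⬝ᵥ x.1 : ℝ) : EReal)) ⟨Ay, h1, h2⟩
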